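/- With the notation of the Dunkl-Appell generating function, Σ_{k=0}^∞ p_{k+1}(nx)/γ_μ(k) = nx·A(1)e_μ(nx) + μ e_μ(−nx)[A(1) − A(−1)] + A'(1) e_μ(nx). -/

import Mathlib

open scoped BigOperators
open MeasureTheory Filter

/-- Parity indicator: 0 for even, 1 for odd. -/
def theta (j : ℕ) : ℝ := if j % 2 = 1 then 1 else 0

/-- Dunkl coefficients via the recursion. -/
noncomputable def gamRec (μ : ℝ) : ℕ → ℝ
  | 0 => 1
  | k + 1 => ((k : ℝ) + 1 + 2 * μ * theta (k + 1)) * gamRec μ k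

/-- Dunkl exponential. -/
noncomputable def emu (μ : ℝ) (x : ℝ) : ℝ := ∑' k : ℕ, x ^ k / gamRec μ k

/-- Dunkl-Appell polynomials. -/
noncomputable def pk (μ : ℝ) (a : ℕ → ℝ) (k : ℕ) (x : ℝ) : ℝ :=
  ∑ j ∈ Finset.range (k + 1),
    (gamRec μ k / (gamRec μ j * gamRec μ (k - j))) * a (k - j) * x ^ j

/-- The analytic function A. -/
noncomputable def Afun (μ : ℝ) (a : ℕ → ℝ) (t : ℝ) : ℝ := ∑' r : ℕ, a r * t ^ r / gamRec μ r

/-- Dunkl-Appell Gamma-type (Szász–Durrmeyer) operator. -/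
noncomputable def Dop (μ lam : ℝ) (a : ℕ → ℝ) (n : ℕ) (f : ℝ → ℝ) (x : ℝ) : ℝ :=
  (1 / (emu μ (n * x) * Afun μ a 1)) *
    ∑' k : ℕ, (pk μ a k (n * x) / gamRec μ k) *
      ((n : ℝ) ^ ((k : ℝ) + 2 * μ * theta k + lam + 1) /
        Real.Gamma ((k : ℝ) + 2 * μ * theta k + lam + 1)) *
      ∫ t in Set.Ioi (0 : ℝ), Real.exp (-(n : ℝ) * t) * t ^ ((k : ℝ) + 2 * μ * theta k + lam) * f t

/-- Analyticity (radius of convergence > 1) hypothesis for A. -/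
def AnalyticHyp (μ : ℝ) (a : ℕ → ℝ) : Prop :=
  ∃ R > (1 : ℝ), ∀ t : ℝ, |t| < R → Summable (fun r : ℕ => a r * t ^ r / gamRec μ r)

/-- Modulus of continuity on [0,∞). -/
noncomputable def modCont (f : ℝ → ℝ) (δ : ℝ) : ℝ :=
  sSup {d : ℝ | ∃ x y : ℝ, 0 ≤ x ∧ 0 ≤ y ∧ |x - y| ≤ δ ∧ d = |f x - f y|}

/-- sup norm on [0,∞). -/
noncomputable def CBnorm (g : ℝ → ℝ) : ℝ := sSup ((fun x => |g x|) '' Set.Ici 0)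

/-- Dunkl coefficients via the Gamma-function formulas of the paper. -/
noncomputable def gamG (μ : ℝ) (m : ℕ) : ℝ :=
  if m % 2 = 0 then
    2 ^ m * (Nat.factorial (m / 2)) * Real.Gamma ((m / 2 : ℕ) + μ + 1 / 2) / Real.Gamma (μ + 1 / 2)
  else
    2 ^ m * (Nat.factorial ((m - 1) / 2)) * Real.Gamma (((m - 1) / 2 : ℕ) + μ + 3 / 2) / Real.Gamma (μ + 1 / 2)




lemma theta_nonneg (j : ℕ) : 0 ≤ theta j := by unfold theta; split <;> norm_num

lemma theta_le_one (j : ℕ) : theta j ≤ 1 := by unfold theta; split <;> norm_num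

lemma theta_zero : theta 0 = 0 := by norm_num [theta]

lemma theta_add (j i : ℕ) :
    theta (j + i) = theta j + theta i - 2 * theta j * theta i := by
  unfold theta
  rcases Nat.mod_two_eq_zero_or_one j with hj | hj <;>
    rcases Nat.mod_two_eq_zero_or_one i with hi | hi <;>
      simp [Nat.add_mod, hj, hi] <;> norm_num

lemma gam_succ (μ : ℝ) (k : ℕ) :
    gamRec μ (k + 1) = ((k : ℝ) + 1 + 2 * μ * theta (k + 1)) * gamRec μ k := rfl

lemma gam_pos {μ : ℝ} (hμ : 0 ≤ μ) (k : ℕ) : 0 < gamRec μ k := by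
  induction k with
  | zero => norm_num [gamRec]
  | succ k ih =>
      rw [gam_succ]
      have h1 : (0:ℝ) < (k : ℝ) + 1 + 2 * μ * theta (k+1) := by
        have := theta_nonneg (k+1)
        positivity
      positivity

lemma gam_ne {μ : ℝ} (hμ : 0 ≤ μ) (k : ℕ) : gamRec μ k ≠ 0 := (gam_pos hμ k).ne'

lemma fact_le_gam {μ : ℝ} (hμ : 0 ≤ μ) (k : ℕ) :
    (k.factorial : ℝ) ≤ gamRec μ k := by
  induction k with
  | zero => norm_num [gamRec]
  | succ k ih =>
      rw [gam_succ]
      have h0 : (0:ℝ) ≤ (k.factorial : ℝ) := by positivity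
      have h1 : ((k:ℝ) + 1) ≤ (k : ℝ) + 1 + 2 * μ * theta (k+1) := by
        have := theta_nonneg (k+1); nlinarith
      calc ((k+1).factorial : ℝ) = ((k:ℝ)+1) * (k.factorial : ℝ) := by
            push_cast [Nat.factorial_succ]; ring
        _ ≤ ((k:ℝ) + 1 + 2 * μ * theta (k+1)) * gamRec μ k := by
            apply mul_le_mul h1 ih h0
            nlinarith

noncomputable def U1 (μ y : ℝ) (j : ℕ) : ℝ := ((j:ℝ) + 2*μ*theta j) * (y ^ j / gamRec μ j)
noncomputable def U2 (μ y : ℝ) (j : ℕ) : ℝ := y ^ j / gamRec μ j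
noncomputable def U3 (μ y : ℝ) (j : ℕ) : ℝ := (-(4*μ)) * theta j * (y ^ j / gamRec μ j)
noncomputable def V1 (μ : ℝ) (a : ℕ → ℝ) (i : ℕ) : ℝ := a i / gamRec μ i
noncomputable def V2 (μ : ℝ) (a : ℕ → ℝ) (i : ℕ) : ℝ := ((i:ℝ) + 2*μ*theta i) * (a i / gamRec μ i)
noncomputable def V3 (μ : ℝ) (a : ℕ → ℝ) (i : ℕ) : ℝ := theta i * (a i / gamRec μ i)

lemma term_split {μ : ℝ} (hμ : 0 ≤ μ) (a : ℕ → ℝ) (y : ℝ) (k j i : ℕ)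
    (h : j + i = k + 1) :
    gamRec μ (k+1) / (gamRec μ j * gamRec μ i) * a i * y ^ j / gamRec μ k
      = U1 μ y j * V1 μ a i + U2 μ y j * V2 μ a i + U3 μ y j * V3 μ a i := by
  have hθ : theta (k+1) = theta j + theta i - 2 * theta j * theta i := by
    rw [← h, theta_add]
  have hk : (k:ℝ) + 1 = (j:ℝ) + (i:ℝ) := by
    have : ((j + i : ℕ) : ℝ) = ((k + 1 : ℕ) : ℝ) := by rw [h]
    push_cast at this; linarith
  rw [gam_succ, hθ, hk]
  unfold U1 U2 U3 V1 V2 V3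
  field_simp [gam_ne hμ]
  ring

lemma U1_succ {μ : ℝ} (hμ : 0 ≤ μ) (y : ℝ) (j : ℕ) : U1 μ y (j+1) = y * U2 μ y j := by
  have hfac : (0:ℝ) < (j:ℝ) + 1 + 2*μ*theta (j+1) := by
    have := theta_nonneg (j+1); positivity
  have hc : ((j+1:ℕ):ℝ) = (j:ℝ)+1 := by push_cast; ring
  unfold U1 U2
  rw [gam_succ, hc]
  field_simp [gam_ne hμ j, hfac.ne']
  ring

lemma V2_succ {μ : ℝ} (hμ : 0 ≤ μ) (a : ℕ → ℝ) (i : ℕ) :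
    V2 μ a (i+1) = a (i+1) / gamRec μ i := by
  have hfac : (0:ℝ) < (i:ℝ) + 1 + 2*μ*theta (i+1) := by
    have := theta_nonneg (i+1); positivity
  have hc : ((i+1:ℕ):ℝ) = (i:ℝ)+1 := by push_cast; ring
  unfold V2
  rw [gam_succ, hc]
  field_simp [gam_ne hμ i, hfac.ne']

lemma neg_pow_theta (y : ℝ) (j : ℕ) : y ^ j - (-y) ^ j = 2 * theta j * y ^ j := by
  rcases Nat.even_or_odd j with h | h
  · rw [h.neg_pow]
    have : theta j = 0 := by unfold theta; rw [Nat.even_iff] at h; simp [h]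
    rw [this]; ring
  · rw [h.neg_pow]
    have : theta j = 1 := by unfold theta; rw [Nat.odd_iff] at h; simp [h]
    rw [this]; ring

lemma U1_zero (μ y : ℝ) : U1 μ y 0 = 0 := by simp [U1, theta_zero]
lemma V2_zero (μ : ℝ) (a : ℕ → ℝ) : V2 μ a 0 = 0 := by simp [V2, theta_zero]
lemma U3_zero (μ y : ℝ) : U3 μ y 0 = 0 := by simp [U3, theta_zero]

lemma summable_linear_geometric (c q : ℝ) (hq : ‖q‖ < 1) :
    Summable fun i : ℕ => ((i:ℝ) + c) * q ^ i := by
  have h1 := summable_pow_mul_geometric_of_norm_lt_one 1 hq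
  simp only [pow_one] at h1
  have h2 : Summable fun i : ℕ => c * q ^ i :=
    (summable_geometric_of_norm_lt_one hq).mul_left c
  exact (h1.add h2).congr fun i => by ring

lemma summable_norm_U2 {μ : ℝ} (hμ : 0 ≤ μ) (z : ℝ) :
    Summable fun j : ℕ => ‖U2 μ z j‖ := by
  apply Summable.of_nonneg_of_le (fun _ => norm_nonneg _) ?_
    (Real.summable_pow_div_factorial |z|)
  intro j
  rw [U2, Real.norm_eq_abs, abs_div, abs_of_pos (gam_pos hμ j), abs_pow]
  have hf : (0:ℝ) < (j.factorial : ℝ) := by positivity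
  exact div_le_div_of_nonneg_left (by positivity) hf (fact_le_gam hμ j)

lemma summable_norm_U1 {μ : ℝ} (hμ : 0 ≤ μ) (y : ℝ) :
    Summable fun j : ℕ => ‖U1 μ y j‖ := by
  rw [← summable_nat_add_iff 1]
  simp only [U1_succ hμ, norm_mul]
  exact (summable_norm_U2 hμ y).mul_left ‖y‖

lemma summable_norm_U3 {μ : ℝ} (hμ : 0 ≤ μ) (y : ℝ) :
    Summable fun j : ℕ => ‖U3 μ y j‖ := by
  apply Summable.of_nonneg_of_le (fun _ => norm_nonneg _) ?_
    ((summable_norm_U2 hμ y).mul_left (4*μ))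
  intro j
  rw [U3, U2, norm_mul, norm_mul]
  have h1 : ‖-(4*μ)‖ = 4*μ := by rw [norm_neg, Real.norm_eq_abs, abs_of_nonneg (by linarith)]
  have h2 : ‖theta j‖ ≤ 1 := by
    rw [Real.norm_eq_abs, abs_of_nonneg (theta_nonneg j)]; exact theta_le_one j
  calc ‖-(4*μ)‖ * ‖theta j‖ * ‖y^j / gamRec μ j‖
      ≤ (4*μ) * 1 * ‖y^j / gamRec μ j‖ := by
        rw [h1]; gcongr
    _ = 4*μ * ‖y^j / gamRec μ j‖ := by ring

lemma tsum_U2 (μ z : ℝ) : ∑' j : ℕ, U2 μ z j = emu μ z := rfl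

lemma tsum_U1 {μ : ℝ} (hμ : 0 ≤ μ) (y : ℝ) :
    ∑' j : ℕ, U1 μ y j = y * emu μ y := by
  rw [Summable.tsum_eq_zero_add ((summable_norm_U1 hμ y).of_norm), U1_zero]
  simp only [U1_succ hμ]
  rw [tsum_mul_left, tsum_U2]; ring

lemma tsum_U3 {μ : ℝ} (hμ : 0 ≤ μ) (y : ℝ) :
    ∑' j : ℕ, U3 μ y j = -(2*μ) * (emu μ y - emu μ (-y)) := by
  have hptw : ∀ j, U3 μ y j = (-(2*μ)) * (U2 μ y j - U2 μ (-y) j) := by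
    intro j
    unfold U3 U2
    rw [div_sub_div_same, neg_pow_theta]
    ring
  rw [tsum_congr hptw, tsum_mul_left,
    Summable.tsum_sub ((summable_norm_U2 hμ y).of_norm) ((summable_norm_U2 hμ (-y)).of_norm),
    tsum_U2, tsum_U2]

theorem appell_sum_shift_one (μ : ℝ) (hμ : 0 ≤ μ) (a : ℕ → ℝ) (ha0 : a 0 ≠ 0)
    (hA : AnalyticHyp μ a) (n : ℕ) (x : ℝ) (hx : 0 ≤ x) :
    ∑' k : ℕ, pk μ a (k + 1) (n * x) / gamRec μ k =
      (n * x) * Afun μ a 1 * emu μ (n * x) +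
      μ * emu μ (-(n * x)) * (Afun μ a 1 - Afun μ a (-1)) +
      deriv (Afun μ a) 1 * emu μ (n * x) := by
  obtain ⟨R, hR1, hRs⟩ := hA
  set y : ℝ := (n:ℝ) * x with hy
  have hs1 : Summable (fun r : ℕ => a r * 1 ^ r / gamRec μ r) :=
    hRs 1 (by rw [abs_one]; exact hR1)
  have hsm1 : Summable (fun r : ℕ => a r * (-1) ^ r / gamRec μ r) :=
    hRs (-1) (by rw [abs_neg, abs_one]; exact hR1)
  set t₁ : ℝ := (1+R)/2 with ht₁def
  have ht₁1 : 1 < t₁ := by rw [ht₁def]; linarith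
  have ht₁0 : 0 < t₁ := by linarith
  have ht₁R : t₁ < R := by rw [ht₁def]; linarith
  have hst₁ : Summable (fun r : ℕ => a r * t₁ ^ r / gamRec μ r) :=
    hRs t₁ (by rw [abs_of_pos ht₁0]; exact ht₁R)
  obtain ⟨C, hCmem⟩ : BddAbove (Set.range fun r : ℕ => |a r * t₁ ^ r / gamRec μ r|) :=
    (hst₁.tendsto_atTop_zero.abs).bddAbove_range
  have hC : ∀ r, |a r| / gamRec μ r ≤ C / t₁ ^ r := by
    intro r
    have h1 : |a r * t₁ ^ r / gamRec μ r| ≤ C := hCmem ⟨r, rfl⟩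
    rw [abs_div, abs_mul, abs_of_pos (gam_pos hμ r), abs_of_pos (pow_pos ht₁0 r)] at h1
    rw [div_le_div_iff₀ (gam_pos hμ r) (pow_pos ht₁0 r)]
    rw [div_le_iff₀ (gam_pos hμ r)] at h1
    linarith
  have hC0 : 0 ≤ C := by
    have h2 := hC 0
    simp only [pow_zero, div_one] at h2
    have h3 : (0:ℝ) ≤ |a 0| / gamRec μ 0 := div_nonneg (abs_nonneg _) (gam_pos hμ 0).le
    linarith
  have hq1 : ‖1/t₁‖ < 1 := by
    rw [Real.norm_eq_abs, abs_of_pos (by positivity), div_lt_one ht₁0]; linarith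
  -- norm-summability of the V's
  have hNv1 : Summable fun i : ℕ => ‖V1 μ a i‖ := by
    apply Summable.of_nonneg_of_le (fun _ => norm_nonneg _) ?_
      ((summable_geometric_of_norm_lt_one hq1).mul_left C)
    intro i
    rw [V1, Real.norm_eq_abs, abs_div, abs_of_pos (gam_pos hμ i)]
    calc |a i| / gamRec μ i ≤ C / t₁ ^ i := hC i
      _ = C * (1/t₁)^i := by rw [one_div, inv_pow, div_eq_mul_inv]
  have hNv3 : Summable fun i : ℕ => ‖V3 μ a i‖ := by
    apply Summable.of_nonneg_of_le (fun _ => norm_nonneg _) ?_ hNv1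
    intro i
    rw [V3, V1, norm_mul]
    have h4 : ‖theta i‖ ≤ 1 := by
      rw [Real.norm_eq_abs, abs_of_nonneg (theta_nonneg i)]; exact theta_le_one i
    nlinarith [norm_nonneg (a i / gamRec μ i), norm_nonneg (theta i)]
  have hNv2 : Summable fun i : ℕ => ‖V2 μ a i‖ := by
    rw [← summable_nat_add_iff 1]
    apply Summable.of_nonneg_of_le (fun _ => norm_nonneg _) ?_
      ((summable_linear_geometric (1+2*μ) (1/t₁) hq1).mul_left (C/t₁))
    intro i
    rw [V2_succ hμ, Real.norm_eq_abs, abs_div, abs_of_pos (gam_pos hμ i)]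
    have hθ0 := theta_nonneg (i+1)
    have hθ1 := theta_le_one (i+1)
    have hfac0 : (0:ℝ) ≤ (i:ℝ)+1+2*μ*theta (i+1) := by positivity
    have hkey : |a (i+1)| / gamRec μ i
        = (|a (i+1)| / gamRec μ (i+1)) * ((i:ℝ)+1+2*μ*theta (i+1)) := by
      rw [gam_succ]
      have hne : ((i:ℝ)+1+2*μ*theta (i+1)) ≠ 0 := by positivity
      field_simp [gam_ne hμ i]
    rw [hkey]
    calc (|a (i+1)| / gamRec μ (i+1)) * ((i:ℝ)+1+2*μ*theta (i+1))
        ≤ (C / t₁ ^ (i+1)) * ((i:ℝ)+1+2*μ) := by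
          apply mul_le_mul (hC (i+1)) (by nlinarith)
            hfac0 (by positivity)
      _ = (C/t₁) * (((i:ℝ) + (1+2*μ)) * (1/t₁)^i) := by
          rw [pow_succ, one_div, inv_pow]
          field_simp
          ring
  have hv3 := hNv3.of_norm
  -- tsum values for the V's
  have hTv1 : ∑' i, V1 μ a i = Afun μ a 1 := by
    unfold Afun
    apply tsum_congr
    intro i
    rw [V1, one_pow, mul_one]
  have hTv3 : ∑' i, V3 μ a i = (Afun μ a 1 - Afun μ a (-1)) / 2 := by
    have hptw : ∀ i, V3 μ a i
        = (1/2) * (a i * 1^i/gamRec μ i - a i * (-1)^i/gamRec μ i) := by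
      intro i
      have h2 : (1:ℝ)^i - (-1:ℝ)^i = 2 * theta i := by
        simpa using neg_pow_theta 1 i
      have h3 : ((-1:ℝ))^i = 1 - 2*theta i := by
        simp only [one_pow] at h2; linarith
      rw [V3, h3, one_pow]
      field_simp [gam_ne hμ i]
      ring
    rw [tsum_congr hptw, tsum_mul_left, Summable.tsum_sub hs1 hsm1]
    unfold Afun
    ring
  have hslin : Summable fun i : ℕ => (i:ℝ) * (a i / gamRec μ i) := by
    apply Summable.of_norm
    apply Summable.of_nonneg_of_le (fun _ => norm_nonneg _) ?_
      ((summable_linear_geometric 0 (1/t₁) hq1).mul_left C)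
    intro i
    rw [norm_mul, Real.norm_eq_abs ((i:ℝ)), abs_of_nonneg (Nat.cast_nonneg i),
      Real.norm_eq_abs, abs_div, abs_of_pos (gam_pos hμ i)]
    calc (i:ℝ) * (|a i| / gamRec μ i) ≤ (i:ℝ) * (C / t₁^i) :=
          mul_le_mul_of_nonneg_left (hC i) (Nat.cast_nonneg i)
      _ = C * (((i:ℝ)+0) * (1/t₁)^i) := by
          rw [one_div, inv_pow]; field_simp; ring
  have hTv2 : ∑' i, V2 μ a i
      = (∑' i : ℕ, (i:ℝ) * (a i / gamRec μ i)) + 2*μ*((Afun μ a 1 - Afun μ a (-1))/2) := by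
    have hptw : ∀ i, V2 μ a i = (i:ℝ) * (a i / gamRec μ i) + (2*μ) * V3 μ a i := by
      intro i; rw [V2, V3]; ring
    rw [tsum_congr hptw, Summable.tsum_add hslin (hv3.mul_left (2*μ)), tsum_mul_left, hTv3]
  -- the derivative of Afun at 1
  have hderiv : deriv (Afun μ a) 1 = ∑' i : ℕ, (i:ℝ) * (a i / gamRec μ i) := by
    set t₀ : ℝ := (1+t₁)/2 with ht₀def
    have ht₀1 : 1 < t₀ := by rw [ht₀def]; linarith
    have ht₀t₁ : t₀ < t₁ := by rw [ht₀def]; linarith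
    have ht₀0 : 0 < t₀ := by linarith
    clear_value t₀ t₁
    have hqq : ‖t₀/t₁‖ < 1 := by
      rw [Real.norm_eq_abs, abs_of_pos (by positivity), div_lt_one ht₁0]; exact ht₀t₁
    have H : HasDerivAt (fun z => ∑' r : ℕ, a r * z ^ r / gamRec μ r)
        (∑' r : ℕ, a r * ((r:ℝ) * (1:ℝ) ^ (r-1)) / gamRec μ r) 1 := by
      apply hasDerivAt_tsum_of_isPreconnected
        (u := fun r : ℕ => (C/t₀) * (((r:ℝ)+0) * (t₀/t₁)^r))
        ((summable_linear_geometric 0 (t₀/t₁) hqq).mul_left (C/t₀))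
        Metric.isOpen_ball ((convex_ball (0:ℝ) t₀).isPreconnected)
        (fun r z _ => ((hasDerivAt_pow r z).const_mul (a r)).div_const (gamRec μ r))
        ?_ (Metric.mem_ball_self ht₀0)
        (hRs 0 (by rw [abs_zero]; linarith))
        (by rw [Metric.mem_ball, Real.dist_eq, sub_zero, abs_one]; exact ht₀1)
      intro r z hz
      rw [Metric.mem_ball, Real.dist_eq, sub_zero] at hz
      rw [Real.norm_eq_abs, abs_div, abs_of_pos (gam_pos hμ r), abs_mul, abs_mul,
        abs_of_nonneg (show (0:ℝ) ≤ (r:ℝ) from Nat.cast_nonneg r), abs_pow]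
      match r with
      | 0 => simp
      | Nat.succ s =>
        have h1 : |z|^(s+1-1) ≤ t₀^s := by
          simpa using pow_le_pow_left₀ (abs_nonneg z) hz.le s
        have h2 : |a (s+1)| * (((s+1:ℕ):ℝ) * |z|^(s+1-1)) / gamRec μ (s+1)
            ≤ (C / t₁^(s+1)) * (((s+1:ℕ):ℝ) * t₀^s) := by
          rw [mul_comm (|a (s+1)|) _, mul_div_assoc]
          rw [mul_comm (C / t₁^(s+1)) _]
          apply mul_le_mul (by gcongr) (hC (s+1))
            (div_nonneg (abs_nonneg _) (gam_pos hμ _).le) (by positivity)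
        refine h2.trans (le_of_eq ?_)
        push_cast
        rw [div_pow]
        field_simp [ht₀0.ne', ht₁0.ne']
        simp only [Nat.succ_eq_add_one, pow_succ]
        ring
    have hfe : (fun z => ∑' r : ℕ, a r * z ^ r / gamRec μ r) = Afun μ a := rfl
    rw [hfe] at H
    rw [H.deriv]
    apply tsum_congr
    intro r
    rw [one_pow, mul_one]
    ring
  -- the per-term splitting
  have key : ∀ k : ℕ, pk μ a (k+1) y / gamRec μ k
      = ∑ j ∈ Finset.range (k+1+1),
          (U1 μ y j * V1 μ a (k+1-j) + U2 μ y j * V2 μ a (k+1-j)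
            + U3 μ y j * V3 μ a (k+1-j)) := by
    intro k
    rw [pk, Finset.sum_div]
    apply Finset.sum_congr rfl
    intro j hj
    rw [Finset.mem_range] at hj
    exact term_split hμ a y k j (k+1-j) (by omega)
  have hNu1 := summable_norm_U1 hμ y
  have hNu2 := summable_norm_U2 hμ y
  have hNu3 := summable_norm_U3 hμ y
  have hS1 := (summable_norm_sum_mul_range_of_summable_norm hNu1 hNv1).of_norm
  have hS2 := (summable_norm_sum_mul_range_of_summable_norm hNu2 hNv2).of_norm
  have hS3 := (summable_norm_sum_mul_range_of_summable_norm hNu3 hNv3).of_norm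
  have hFsplit : ∀ m : ℕ, ∑ j ∈ Finset.range (m+1),
        (U1 μ y j * V1 μ a (m-j) + U2 μ y j * V2 μ a (m-j) + U3 μ y j * V3 μ a (m-j))
      = (∑ j ∈ Finset.range (m+1), U1 μ y j * V1 μ a (m-j))
        + (∑ j ∈ Finset.range (m+1), U2 μ y j * V2 μ a (m-j))
        + (∑ j ∈ Finset.range (m+1), U3 μ y j * V3 μ a (m-j)) := by
    intro m
    rw [← Finset.sum_add_distrib, ← Finset.sum_add_distrib]
  have hFs : Summable (fun m : ℕ => ∑ j ∈ Finset.range (m+1),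
      (U1 μ y j * V1 μ a (m-j) + U2 μ y j * V2 μ a (m-j) + U3 μ y j * V3 μ a (m-j))) :=
    ((hS1.add hS2).add hS3).congr (fun m => (hFsplit m).symm)
  have hF0 : ∑ j ∈ Finset.range (0+1),
      (U1 μ y j * V1 μ a (0-j) + U2 μ y j * V2 μ a (0-j) + U3 μ y j * V3 μ a (0-j)) = 0 := by
    rw [Finset.sum_range_one]
    simp [U1_zero, V2_zero, U3_zero]
  calc ∑' k : ℕ, pk μ a (k + 1) y / gamRec μ k
      = ∑' k : ℕ, ∑ j ∈ Finset.range ((k+1)+1),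
          (U1 μ y j * V1 μ a ((k+1)-j) + U2 μ y j * V2 μ a ((k+1)-j)
            + U3 μ y j * V3 μ a ((k+1)-j)) := tsum_congr key
    _ = ∑' m : ℕ, ∑ j ∈ Finset.range (m+1),
          (U1 μ y j * V1 μ a (m-j) + U2 μ y j * V2 μ a (m-j) + U3 μ y j * V3 μ a (m-j)) := by
        rw [Summable.tsum_eq_zero_add hFs, hF0, zero_add]
    _ = (∑' m : ℕ, ∑ j ∈ Finset.range (m+1), U1 μ y j * V1 μ a (m-j))
        + (∑' m : ℕ, ∑ j ∈ Finset.range (m+1), U2 μ y j * V2 μ a (m-j))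
        + (∑' m : ℕ, ∑ j ∈ Finset.range (m+1), U3 μ y j * V3 μ a (m-j)) := by
        rw [tsum_congr hFsplit, Summable.tsum_add (hS1.add hS2) hS3, Summable.tsum_add hS1 hS2]
    _ = (∑' j, U1 μ y j) * (∑' i, V1 μ a i) + (∑' j, U2 μ y j) * (∑' i, V2 μ a i)
        + (∑' j, U3 μ y j) * (∑' i, V3 μ a i) := by
        rw [← tsum_mul_tsum_eq_tsum_sum_range_of_summable_norm hNu1 hNv1,
          ← tsum_mul_tsum_eq_tsum_sum_range_of_summable_norm hNu2 hNv2,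
          ← tsum_mul_tsum_eq_tsum_sum_range_of_summable_norm hNu3 hNv3]
    _ = y * Afun μ a 1 * emu μ y + μ * emu μ (-y) * (Afun μ a 1 - Afun μ a (-1))
        + deriv (Afun μ a) 1 * emu μ y := by
        rw [tsum_U1 hμ, tsum_U2, tsum_U3 hμ, hTv1, hTv2, hTv3, hderiv]
        ring
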